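/- Let D be a contractive distance on two-qubit density matrices. Let c1, c3 ∈ [-1,1] and y ∈ [-1,1]. Then D(ρ(c1,-c1·c3,c3), ρ(0,0,c3)) ≤ D(ρ(c1,-c1·c3,c3), ρ(0,y,0)). That is, the orthogonal projection of the freezing-surface state onto the c3-axis is closer to it than any BD classical state on the c2-axis. -/

import Mathlib

open Matrix Kronecker
open scoped ComplexOrder

noncomputable section

/-- 2×2 complex matrices (single-qubit operators). -/
abbrev Mat2 := Matrix (Fin 2) (Fin 2) ℂ

/-- 4×4 complex matrices (two-qubit operators), indexed by `Fin 2 × Fin 2`. -/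
abbrev Mat4 := Matrix (Fin 2 × Fin 2) (Fin 2 × Fin 2) ℂ

/-- Pauli matrix σ₁ (x). -/
def σ1 : Mat2 := !![0, 1; 1, 0]

/-- Pauli matrix σ₂ (y). -/
def σ2 : Mat2 := !![0, -Complex.I; Complex.I, 0]

/-- Pauli matrix σ₃ (z). -/
def σ3 : Mat2 := !![1, 0; 0, -1]

/-- The Bell-diagonal state ρ(c1,c2,c3) = (1/4)(I₄ + c1 σ₁⊗σ₁ + c2 σ₂⊗σ₂ + c3 σ₃⊗σ₃). -/
def BD (c1 c2 c3 : ℝ) : Mat4 :=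
  (1 / 4 : ℂ) • ((1 : Mat4) + (c1 : ℂ) • (σ1 ⊗ₖ σ1) + (c2 : ℂ) • (σ2 ⊗ₖ σ2)
    + (c3 : ℂ) • (σ3 ⊗ₖ σ3))

/-- A two-qubit density matrix: positive semidefinite with unit trace. -/
def IsDensityMatrix (ρ : Mat4) : Prop := ρ.PosSemidef ∧ ρ.trace = 1

/-- A CPTP map given by finitely many Kraus operators. -/
def IsCPTP (Λ : Mat4 → Mat4) : Prop :=
  ∃ (n : ℕ) (K : Fin n → Mat4),
    (∑ i, (K i)ᴴ * K i) = 1 ∧ ∀ X, Λ X = ∑ i, K i * X * (K i)ᴴ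

/-- A distance `D` is contractive if it contracts under every CPTP map. -/
def Contractive (D : Mat4 → Mat4 → ℝ) : Prop :=
  ∀ Λ : Mat4 → Mat4, IsCPTP Λ → ∀ ρ σ : Mat4,
    IsDensityMatrix ρ → IsDensityMatrix σ → D (Λ ρ) (Λ σ) ≤ D ρ σ

/-- A distance `D` is invariant under transposition. -/
def TransposeInvariant (D : Mat4 → Mat4 → ℝ) : Prop :=
  ∀ ρ σ : Mat4, IsDensityMatrix ρ → IsDensityMatrix σ → D ρᵀ σᵀ = D ρ σ

/-- A distance `D` is jointly convex. -/
def JointlyConvex (D : Mat4 → Mat4 → ℝ) : Prop :=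
  ∀ q : ℝ, 0 ≤ q → q ≤ 1 → ∀ ρ σ τ ς : Mat4,
    IsDensityMatrix ρ → IsDensityMatrix σ → IsDensityMatrix τ → IsDensityMatrix ς →
    D (q • ρ + (1 - q) • σ) (q • τ + (1 - q) • ς) ≤ q * D ρ τ + (1 - q) * D σ ς

/-- A classical-classical two-qubit state: ∑ᵢⱼ pᵢⱼ |aᵢ⟩⟨aᵢ| ⊗ |bⱼ⟩⟨bⱼ| with (pᵢⱼ) a
probability distribution and {aᵢ}, {bⱼ} orthonormal bases of ℂ². -/
def IsClassical (χ : Mat4) : Prop :=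
  ∃ (p : Fin 2 → Fin 2 → ℝ) (a b : Fin 2 → Fin 2 → ℂ),
    (∀ i j, 0 ≤ p i j) ∧ (∑ i, ∑ j, p i j = 1) ∧
    (∀ i i', ∑ k, (starRingEnd ℂ) (a i k) * a i' k = if i = i' then 1 else 0) ∧
    (∀ j j', ∑ k, (starRingEnd ℂ) (b j k) * b j' k = if j = j' then 1 else 0) ∧
    χ = ∑ i, ∑ j, (p i j : ℂ) •
      (Matrix.vecMulVec (a i) (star (a i)) ⊗ₖ Matrix.vecMulVec (b j) (star (b j)))

/-- Membership in the tetrahedron of Bell-diagonal states. -/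
def InTetra (c : ℝ × ℝ × ℝ) : Prop :=
  c ∈ convexHull ℝ
    ({((1 : ℝ), (-1 : ℝ), (1 : ℝ)), ((-1 : ℝ), (1 : ℝ), (1 : ℝ)),
      ((1 : ℝ), (1 : ℝ), (-1 : ℝ)), ((-1 : ℝ), (-1 : ℝ), (-1 : ℝ))} : Set (ℝ × ℝ × ℝ))

/-- Geometric discord: distance to the set of classical states. -/
def QD (D : Mat4 → Mat4 → ℝ) (ρ : Mat4) : ℝ :=
  sInf {x : ℝ | ∃ χ : Mat4, IsClassical χ ∧ x = D ρ χ}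

/-- The Pauli matrices, indexed. -/
def pauli : Fin 3 → Mat2 := ![σ1, σ2, σ3]

section Aux

def bv : Fin 2 → Fin 2 → (Fin 2 × Fin 2 → ℂ) :=
  ![![fun p => !![(1:ℂ),0;0,1] p.1 p.2, fun p => !![(0:ℂ),1;1,0] p.1 p.2],
    ![fun p => !![(1:ℂ),0;0,-1] p.1 p.2, fun p => !![(0:ℂ),1;-1,0] p.1 p.2]]
def BP (s t : Fin 2) : Mat4 := vecMulVec (bv s t) (star (bv s t))
def w (a b c : ℝ) : Fin 2 → Fin 2 → ℝ :=
  ![![(1 + a - b + c)/8, (1 + a + b - c)/8], ![(1 - a + b + c)/8, (1 - a - b - c)/8]]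

theorem BD_eq_sum (a b c : ℝ) : BD a b c = ∑ s, ∑ t, (w a b c s t : ℂ) • BP s t := by
  ext ⟨i,j⟩ ⟨k,l⟩
  fin_cases i <;> fin_cases j <;> fin_cases k <;> fin_cases l <;>
    simp [BD, BP, bv, w, σ1, σ2, σ3, Fin.sum_univ_two, vecMulVec_apply,
      Matrix.kroneckerMap_apply, Matrix.one_apply, Prod.ext_iff] <;> ring

theorem BD_trace (a b c : ℝ) : (BD a b c).trace = 1 := by
  simp [BD, Matrix.trace, Matrix.diag, Fintype.sum_prod_type, Fin.sum_univ_two,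
    σ1, σ2, σ3, Matrix.kroneckerMap_apply, Matrix.one_apply]
  ring

lemma psd_add {A B : Mat4} (hA : A.PosSemidef) (hB : B.PosSemidef) :
    (A + B).PosSemidef :=
  posSemidef_iff_dotProduct_mulVec.mpr ⟨hA.1.add hB.1, fun x => by
    rw [add_mulVec, dotProduct_add]; exact add_nonneg (hA.dotProduct_mulVec_nonneg x) (hB.dotProduct_mulVec_nonneg x)⟩

lemma psd_rank1 (r : ℝ) (hr : 0 ≤ r) (v : Fin 2 × Fin 2 → ℂ) :
    ((r:ℂ) • vecMulVec v (star v)).PosSemidef := by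
  rw [posSemidef_iff_dotProduct_mulVec]
  constructor
  · ext i j
    simp [Matrix.conjTranspose_apply, vecMulVec_apply, star_mul', Complex.conj_ofReal]
    exact Or.inl (mul_comm _ _)
  · intro x
    have key : star x ⬝ᵥ (((r:ℂ) • vecMulVec v (star v)) *ᵥ x)
        = (r:ℂ) * (star (star v ⬝ᵥ x) * (star v ⬝ᵥ x)) := by
      simp only [dotProduct, mulVec, Matrix.smul_apply, vecMulVec_apply, Pi.star_apply,
        smul_eq_mul, star_sum, star_mul', star_star, Finset.mul_sum, Finset.sum_mul]
      rw [Finset.sum_comm]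
      refine Finset.sum_congr rfl fun i _ => Finset.sum_congr rfl fun j _ => by ring
    rw [key]
    exact mul_nonneg (by exact_mod_cast Complex.zero_le_real.2 hr)
      (star_mul_self_nonneg _)

lemma BD_psd (a b c : ℝ) (h00 : 0 ≤ w a b c 0 0) (h01 : 0 ≤ w a b c 0 1)
    (h10 : 0 ≤ w a b c 1 0) (h11 : 0 ≤ w a b c 1 1) : (BD a b c).PosSemidef := by
  rw [BD_eq_sum]
  simp only [Fin.sum_univ_two]
  exact psd_add (psd_add (psd_rank1 _ h00 _) (psd_rank1 _ h01 _))
    (psd_add (psd_rank1 _ h10 _) (psd_rank1 _ h11 _))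

lemma conj_sandwich (c : ℝ) (v e : Fin 2 × Fin 2 → ℂ) (X : Mat4) :
    ((c:ℂ) • vecMulVec v (star e)) * X * ((c:ℂ) • vecMulVec v (star e))ᴴ
      = (((c^2:ℝ):ℂ) * (star e ⬝ᵥ X *ᵥ e)) • vecMulVec v (star v) := by
  ext i j
  simp only [Matrix.mul_apply, Matrix.conjTranspose_apply, Matrix.smul_apply, smul_eq_mul,
    vecMulVec_apply, Pi.star_apply, star_mul', star_star, Complex.star_def,
    Complex.conj_conj, Complex.conj_ofReal, dotProduct, mulVec, Finset.mul_sum,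
    Finset.sum_mul]
  push_cast
  rw [Finset.sum_comm]
  refine Finset.sum_congr rfl fun m _ => Finset.sum_congr rfl fun r _ => by ring

lemma kraus_sq (c : ℝ) (v e : Fin 2 × Fin 2 → ℂ) :
    ((c:ℂ) • vecMulVec v (star e))ᴴ * ((c:ℂ) • vecMulVec v (star e))
      = (((c^2:ℝ):ℂ) * (star v ⬝ᵥ v)) • vecMulVec e (star e) := by
  ext i j
  simp only [Matrix.mul_apply, Matrix.conjTranspose_apply, Matrix.smul_apply, smul_eq_mul,
    vecMulVec_apply, Pi.star_apply, star_mul', star_star, Complex.star_def,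
    Complex.conj_conj, Complex.conj_ofReal, dotProduct]
  push_cast
  rw [Finset.mul_sum, Finset.sum_mul]
  refine Finset.sum_congr rfl fun m _ => by ring

def mu (c3 : ℝ) : Fin 2 → ℝ := ![(1+c3)/2, (1-c3)/2]

def kOp (c3 : ℝ) (s u e : Fin 2) : Mat4 :=
  ((Real.sqrt (mu c3 u) / 2 : ℝ) : ℂ) • vecMulVec (bv s u) (star (bv s e))

def KK (c3 : ℝ) : Fin 8 → Mat4
  | 0 => kOp c3 0 0 0
  | 1 => kOp c3 0 0 1
  | 2 => kOp c3 0 1 0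
  | 3 => kOp c3 0 1 1
  | 4 => kOp c3 1 0 0
  | 5 => kOp c3 1 0 1
  | 6 => kOp c3 1 1 0
  | 7 => kOp c3 1 1 1

lemma q_eval (a b c : ℝ) (s t : Fin 2) :
    star (bv s t) ⬝ᵥ (BD a b c *ᵥ bv s t) = ((4 * w a b c s t : ℝ) : ℂ) := by
  fin_cases s <;> fin_cases t <;>
    simp [bv, BD, w, dotProduct, mulVec, Fintype.sum_prod_type, Fin.sum_univ_two,
      σ1, σ2, σ3, Matrix.kroneckerMap_apply, Matrix.one_apply, Prod.ext_iff] <;>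
    push_cast <;> ring

lemma hk_sq (c3 : ℝ) (h1 : -1 ≤ c3) (h2 : c3 ≤ 1) (u : Fin 2) :
    (Real.sqrt (mu c3 u) / 2)^2 = mu c3 u / 4 := by
  rw [div_pow, Real.sq_sqrt] <;> fin_cases u <;> simp [mu] <;> linarith

set_option maxHeartbeats 2000000 in
lemma ksum (c3 : ℝ) (h1 : -1 ≤ c3) (h2 : c3 ≤ 1) :
    ∑ i, (KK c3 i)ᴴ * KK c3 i = 1 := by
  rw [Fin.sum_univ_eight]
  simp only [KK, kOp, kraus_sq, hk_sq c3 h1 h2]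
  ext ⟨i,j⟩ ⟨k,l⟩
  fin_cases i <;> fin_cases j <;> fin_cases k <;> fin_cases l <;>
    simp [mu, bv, vecMulVec_apply, dotProduct, Fintype.sum_prod_type,
      Fin.sum_univ_two, Matrix.one_apply, Prod.ext_iff] <;> push_cast <;> ring

set_option maxHeartbeats 2000000 in
lemma kact (c3 : ℝ) (h1 : -1 ≤ c3) (h2 : c3 ≤ 1) (a b c : ℝ) :
    ∑ i, KK c3 i * BD a b c * (KK c3 i)ᴴ
      = ∑ s, ∑ u, ((mu c3 u * (w a b c s 0 + w a b c s 1) : ℝ) : ℂ) • BP s u := by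
  rw [Fin.sum_univ_eight]
  simp only [KK, kOp, conj_sandwich, hk_sq c3 h1 h2, q_eval, Fin.sum_univ_two, BP]
  ext ⟨i,j⟩ ⟨k,l⟩
  fin_cases i <;> fin_cases j <;> fin_cases k <;> fin_cases l <;>
    simp [mu, bv, w, vecMulVec_apply, Prod.ext_iff] <;> push_cast <;> ring


lemma kact' (c3 : ℝ) (h1 : -1 ≤ c3) (h2 : c3 ≤ 1) (a b c a' b' c' : ℝ)
    (h : ∀ s u : Fin 2, mu c3 u * (w a b c s 0 + w a b c s 1) = w a' b' c' s u) :
    ∑ i, KK c3 i * BD a b c * (KK c3 i)ᴴ = BD a' b' c' := by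
  rw [kact c3 h1 h2, BD_eq_sum a' b' c']
  exact Finset.sum_congr rfl fun s _ => Finset.sum_congr rfl fun u _ => by rw [h]


end Aux

/-- the projection onto the c3-axis is closer to the freezing-surface state
than any BD classical state on the c2-axis. -/
theorem c3_projection_closer_than_c2_axis
    (D : Mat4 → Mat4 → ℝ) (hD : Contractive D)
    (c1 c3 y : ℝ) (hc1 : c1 ∈ Set.Icc (-1 : ℝ) 1) (hc3 : c3 ∈ Set.Icc (-1 : ℝ) 1)
    (hy : y ∈ Set.Icc (-1 : ℝ) 1) :
    D (BD c1 (-(c1 * c3)) c3) (BD 0 0 c3) ≤ D (BD c1 (-(c1 * c3)) c3) (BD 0 y 0) := by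
  obtain ⟨h1, h2⟩ := hc1
  obtain ⟨h3, h4⟩ := hc3
  obtain ⟨h5, h6⟩ := hy
  have hΛ : IsCPTP (fun X => ∑ i, KK c3 i * X * (KK c3 i)ᴴ) :=
    ⟨8, KK c3, ksum c3 h3 h4, fun X => rfl⟩
  have hρ : IsDensityMatrix (BD c1 (-(c1 * c3)) c3) := by
    refine ⟨BD_psd _ _ _ ?_ ?_ ?_ ?_, BD_trace _ _ _⟩ <;> simp [w] <;>
      nlinarith [mul_nonneg (by linarith : (0:ℝ) ≤ 1+c1) (by linarith : (0:ℝ) ≤ 1+c3),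
        mul_nonneg (by linarith : (0:ℝ) ≤ 1+c1) (by linarith : (0:ℝ) ≤ 1-c3),
        mul_nonneg (by linarith : (0:ℝ) ≤ 1-c1) (by linarith : (0:ℝ) ≤ 1+c3),
        mul_nonneg (by linarith : (0:ℝ) ≤ 1-c1) (by linarith : (0:ℝ) ≤ 1-c3)]
  have hσ : IsDensityMatrix (BD 0 y 0) := by
    refine ⟨BD_psd _ _ _ ?_ ?_ ?_ ?_, BD_trace _ _ _⟩ <;> simp [w] <;> linarith
  have key := hD _ hΛ _ _ hρ hσ
  have e1 : ∑ i, KK c3 i * BD c1 (-(c1 * c3)) c3 * (KK c3 i)ᴴ = BD c1 (-(c1 * c3)) c3 := by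
    refine kact' c3 h3 h4 _ _ _ _ _ _ fun s u => ?_
    fin_cases s <;> fin_cases u <;> simp [mu, w] <;> ring
  have e2 : ∑ i, KK c3 i * BD 0 y 0 * (KK c3 i)ᴴ = BD 0 0 c3 := by
    refine kact' c3 h3 h4 _ _ _ _ _ _ fun s u => ?_
    fin_cases s <;> fin_cases u <;> simp [mu, w] <;> ring
  simpa only [e1, e2] using key
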